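/- An r-shift (rectangular shift) of an a × b axis-aligned rectangle of cells, in which the escort visits the four corners in clockwise order, cyclically permutes the 2a + 2b − 4 boundary tiles of the rectangle by one position counterclockwise, and can be executed in 2a + 2b − 4 GSTP moves. -/
import Mathlib


/-- Manhattan (L1) distance between two cells given by natural coordinates. -/
def distN (p q : ℕ × ℕ) : ℕ :=
  ((p.1 : ℤ) - (q.1 : ℤ)).natAbs + ((p.2 : ℤ) - (q.2 : ℤ)).natAbs

/-- `p` (given as `(row, column)`) is on the boundary of the `a × b` rectangle. -/
def onBoundary (a b : ℕ) (p : ℕ × ℕ) : Prop :=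
  p.1 = 0 ∨ p.1 = a - 1 ∨ p.2 = 0 ∨ p.2 = b - 1

instance (a b : ℕ) (p : ℕ × ℕ) : Decidable (onBoundary a b p) := by
  unfold onBoundary; infer_instance

/-- The counterclockwise successor of a boundary cell of the `a × b` rectangle (rows
`0,…,a−1` top to bottom, columns `0,…,b−1` left to right): down the left column, right
along the bottom row, up the right column, left along the top row. -/
def nextCCW (a b : ℕ) (p : ℕ × ℕ) : ℕ × ℕ :=
  if p.2 = 0 ∧ p.1 + 1 < a then (p.1 + 1, 0)
  else if p.1 = a - 1 ∧ p.2 + 1 < b then (p.1, p.2 + 1)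
  else if p.2 = b - 1 ∧ 0 < p.1 then (p.1 - 1, p.2)
  else (p.1, p.2 - 1)

/-- Where a boundary tile ends up after a clockwise r-shift with the escort starting and
ending at the corner `(0,0)`: one counterclockwise position along the boundary cycle,
skipping over the escort's corner. -/
def shiftTarget (a b : ℕ) (p : ℕ × ℕ) : ℕ × ℕ :=
  if nextCCW a b p = (0, 0) then nextCCW a b (nextCCW a b p) else nextCCW a b p

/-- One elementary sliding move inside the `a × b` rectangle: a single tile slides into
an adjacent empty cell of the rectangle, all other tiles stay put. -/
def RectMove (a b n : ℕ) (c c' : Fin n → ℕ × ℕ) : Prop :=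
  ∃ i, (c' i).1 < a ∧ (c' i).2 < b ∧ distN (c i) (c' i) = 1 ∧
    (∀ j, j ≠ i → c' j = c j) ∧ ∀ j, c j ≠ c' i

/-! ### Auxiliary machinery: the clockwise path of the escort around the boundary. -/

/-- Clockwise path of the empty cell around the boundary, starting at `(0,0)`. -/
def epath (a b t : ℕ) : ℕ × ℕ :=
  if t < b then (0, t)
  else if t < a + b - 1 then (t - (b-1), b-1)
  else if t < a + 2*b - 2 then (a-1, (a + 2*b - 3) - t)
  else (2*a + 2*b - 4 - t, 0)

/-- Clockwise index of a boundary cell. -/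
def cwIdx (a b : ℕ) (p : ℕ × ℕ) : ℕ :=
  if p.1 = 0 then p.2
  else if p.2 = b - 1 then p.1 + b - 1
  else if p.1 = a - 1 then a + 2*b - 3 - p.2
  else 2*a + 2*b - 4 - p.1

/-- Position of the boundary tile of clockwise index `k` at time `t`. -/
def posIdx (N k t : ℕ) : ℕ :=
  if t < k then k else if t < N ∨ 2 ≤ k then k - 1 else N - 1

lemma cwIdx_pair (a b x y : ℕ) : cwIdx a b (x, y) =
    if x = 0 then y else if y = b - 1 then x + b - 1
    else if x = a - 1 then a + 2*b - 3 - y else 2*a + 2*b - 4 - x := rfl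

lemma nextCCW_pair (a b x y : ℕ) : nextCCW a b (x, y) =
    if y = 0 ∧ x + 1 < a then (x + 1, 0)
    else if x = a - 1 ∧ y + 1 < b then (x, y + 1)
    else if y = b - 1 ∧ 0 < x then (x - 1, y)
    else (x, y - 1) := rfl

lemma epath_spec (a b t : ℕ) (ha : 2 ≤ a) (hb : 2 ≤ b) (ht : t ≤ 2*a+2*b-4) :
    (epath a b t).1 < a ∧ (epath a b t).2 < b ∧ onBoundary a b (epath a b t) := by
  simp only [epath, onBoundary]
  split_ifs <;> simp <;> omega

lemma epath_adj (a b t : ℕ) (ha : 2 ≤ a) (hb : 2 ≤ b) (ht : t < 2*a+2*b-4) :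
    distN (epath a b (t+1)) (epath a b t) = 1 := by
  simp only [epath, distN]
  split_ifs <;> simp <;> omega

lemma cwIdx_epath (a b t : ℕ) (ha : 2 ≤ a) (hb : 2 ≤ b) (ht : t < 2*a+2*b-4) :
    cwIdx a b (epath a b t) = t := by
  unfold epath
  split_ifs with h1 h2 h3 <;>
    · rw [cwIdx_pair]
      split_ifs <;> omega

lemma epath_cwIdx (a b : ℕ) (p : ℕ × ℕ) (ha : 2 ≤ a) (hb : 2 ≤ b)
    (hbd : onBoundary a b p) (h1 : p.1 < a) (h2 : p.2 < b) (hne : p ≠ (0,0)) :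
    epath a b (cwIdx a b p) = p ∧ 1 ≤ cwIdx a b p ∧ cwIdx a b p < 2*a+2*b-4 := by
  obtain ⟨x, y⟩ := p
  have hne' : ¬ (x = 0 ∧ y = 0) := by simpa [Prod.ext_iff] using hne
  simp only [onBoundary] at hbd
  simp only at h1 h2 hbd
  rw [cwIdx_pair]
  split_ifs with s1 s2 s3 <;>
    · unfold epath
      split_ifs <;> simp only [Prod.mk.injEq, and_true, true_and] <;> omega

lemma nextCCW_epath (a b t : ℕ) (ha : 2 ≤ a) (hb : 2 ≤ b) (h1 : 1 ≤ t)
    (ht : t ≤ 2*a+2*b-4) :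
    nextCCW a b (epath a b t) = epath a b (t-1) := by
  rw [show epath a b t = (if t < b then (0, t)
      else if t < a + b - 1 then (t - (b-1), b-1)
      else if t < a + 2*b - 2 then (a-1, (a + 2*b - 3) - t)
      else (2*a + 2*b - 4 - t, 0)) from rfl]
  split_ifs with s1 s2 s3 <;>
    · rw [nextCCW_pair]
      unfold epath
      split_ifs <;> simp only [Prod.mk.injEq, and_true, true_and] <;> omega

lemma epath_zero (a b : ℕ) (hb : 2 ≤ b) : epath a b 0 = (0,0) := by
  simp [epath]; omega

lemma epath_last (a b : ℕ) (ha : 2 ≤ a) (hb : 2 ≤ b) :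
    epath a b (2*a+2*b-4) = (0,0) := by
  unfold epath
  split_ifs <;> simp only [Prod.mk.injEq, and_true, true_and] <;> omega

lemma epath_pred_last (a b : ℕ) (ha : 2 ≤ a) (hb : 2 ≤ b) :
    epath a b (2*a+2*b-5) = (1,0) := by
  unfold epath
  split_ifs <;> simp only [Prod.mk.injEq, and_true, true_and] <;> omega

lemma epath_ne_zero (a b t : ℕ) (ha : 2 ≤ a) (hb : 2 ≤ b) (h1 : 1 ≤ t)
    (ht : t < 2*a+2*b-4) : epath a b t ≠ (0,0) := by
  intro h
  have h2 := cwIdx_epath a b t ha hb ht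
  rw [h] at h2
  simp [cwIdx] at h2
  omega

/-- A single step of the r-shift is a legal move. -/
lemma move_step (a b n N : ℕ) (ha : 2 ≤ a) (hb : 2 ≤ b) (hN : N = 2*a+2*b-4)
    (s : Fin n → ℕ × ℕ) (hinj : Function.Injective s)
    (hmem : ∀ i, (s i).1 < a ∧ (s i).2 < b ∧ s i ≠ (0,0))
    (hrange : ∀ p : ℕ × ℕ, (p.1 < a ∧ p.2 < b ∧ p ≠ (0, 0)) ↔ ∃ i, s i = p)
    (t k : ℕ) (ht : t < N) (hk1 : 1 ≤ k) (hkN : k < N)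
    (hA : posIdx N k (t+1) = t)
    (hB : epath a b (posIdx N k t) = epath a b (t+1))
    (hC : ∀ k', 1 ≤ k' → k' < N → k' ≠ k → posIdx N k' (t+1) = posIdx N k' t) :
    RectMove a b n
      (fun i => if onBoundary a b (s i) then epath a b (posIdx N (cwIdx a b (s i)) t) else s i)
      (fun i => if onBoundary a b (s i) then epath a b (posIdx N (cwIdx a b (s i)) (t+1)) else s i) := by
  subst hN
  have hek := epath_spec a b k ha hb (le_of_lt hkN)
  have hekne : epath a b k ≠ (0,0) := epath_ne_zero a b k ha hb hk1 hkN
  obtain ⟨i, hi⟩ := (hrange (epath a b k)).1 ⟨hek.1, hek.2.1, hekne⟩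
  have hbdi : onBoundary a b (s i) := hi ▸ hek.2.2
  have hidx : cwIdx a b (s i) = k := by rw [hi]; exact cwIdx_epath a b k ha hb hkN
  have hkey : ∀ j, onBoundary a b (s j) →
      epath a b (cwIdx a b (s j)) = s j ∧ 1 ≤ cwIdx a b (s j) ∧
        cwIdx a b (s j) < 2*a+2*b-4 :=
    fun j h => epath_cwIdx a b (s j) ha hb h (hmem j).1 (hmem j).2.1 (hmem j).2.2
  refine ⟨i, ?_, ?_, ?_, ?_, ?_⟩ <;> beta_reduce
  · rw [if_pos hbdi, hidx, hA]
    exact (epath_spec a b t ha hb (by omega)).1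
  · rw [if_pos hbdi, hidx, hA]
    exact (epath_spec a b t ha hb (by omega)).2.1
  · simp only [if_pos hbdi, hidx, hA, hB]
    exact epath_adj a b t ha hb ht
  · intro j hj
    by_cases hbj : onBoundary a b (s j)
    · obtain ⟨he', hk1', hkN'⟩ := hkey j hbj
      have hne : cwIdx a b (s j) ≠ k := by
        intro hEq
        apply hj; apply hinj
        rw [← he', hEq, ← hidx, (hkey i hbdi).1]
      simp only [if_pos hbj, hC _ hk1' hkN' hne]
    · simp only [if_neg hbj]
  · intro j
    rw [if_pos hbdi, hidx, hA]
    by_cases hbj : onBoundary a b (s j)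
    · rw [if_pos hbj]
      obtain ⟨he', hk1', hkN'⟩ := hkey j hbj
      have hp : posIdx (2*a+2*b-4) (cwIdx a b (s j)) t ≠ t ∧
          posIdx (2*a+2*b-4) (cwIdx a b (s j)) t < 2*a+2*b-4 := by
        simp only [posIdx]; split_ifs <;> omega
      intro hEq
      have h1 := cwIdx_epath a b (posIdx (2*a+2*b-4) (cwIdx a b (s j)) t) ha hb hp.2
      rw [hEq, cwIdx_epath a b t ha hb ht] at h1
      exact hp.1 h1.symm
    · rw [if_neg hbj]
      intro hEq
      exact hbj (hEq ▸ (epath_spec a b t ha hb (by omega)).2.2)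

/-- A clockwise r-shift of an `a × b` rectangle whose cells are all filled
with tiles except the escort corner `(0,0)` can be executed in `2a + 2b − 4` GSTP
moves, and it cyclically permutes the `2a + 2b − 5` boundary tiles by one position
counterclockwise (leaving interior tiles, and the escort's corner, unchanged). -/
theorem rshift_executes_cyclic_boundary_shift
    (a b n : ℕ) (ha : 2 ≤ a) (hb : 2 ≤ b) (hn : n + 1 = a * b)
    (s : Fin n → ℕ × ℕ)
    (hrange : ∀ p : ℕ × ℕ, (p.1 < a ∧ p.2 < b ∧ p ≠ (0, 0)) ↔ ∃ i, s i = p) :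
    ∃ c : ℕ → Fin n → ℕ × ℕ, c 0 = s ∧
      (∀ t < 2 * a + 2 * b - 4, RectMove a b n (c t) (c (t + 1))) ∧
      ∀ i, c (2 * a + 2 * b - 4) i =
        if onBoundary a b (s i) then shiftTarget a b (s i) else s i := by
  classical
  set N := 2 * a + 2 * b - 4 with hNdef
  have hN4 : 4 ≤ N := by omega
  have hmem : ∀ i, (s i).1 < a ∧ (s i).2 < b ∧ s i ≠ (0,0) :=
    fun i => (hrange (s i)).2 ⟨i, rfl⟩
  have hinj : Function.Injective s := by
    set S := (Finset.range a ×ˢ Finset.range b).erase ((0,0) : ℕ × ℕ) with hS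
    have hmemS : ∀ i, s i ∈ S := by
      intro i
      obtain ⟨h1, h2, h3⟩ := hmem i
      simp only [hS, Finset.mem_erase, Finset.mem_product, Finset.mem_range]
      exact ⟨h3, h1, h2⟩
    have hzero : ((0,0) : ℕ × ℕ) ∈ Finset.range a ×ˢ Finset.range b := by
      simp only [Finset.mem_product, Finset.mem_range]
      constructor <;> omega
    have hcardS : S.card = n := by
      rw [hS, Finset.card_erase_of_mem hzero, Finset.card_product, Finset.card_range,
        Finset.card_range]
      omega
    set g : Fin n → {x // x ∈ S} := fun i => ⟨s i, hmemS i⟩ with hg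
    have hgs : Function.Surjective g := by
      rintro ⟨p, hp⟩
      simp only [hS, Finset.mem_erase, Finset.mem_product, Finset.mem_range] at hp
      obtain ⟨i, hi⟩ := (hrange p).1 ⟨hp.2.1, hp.2.2, hp.1⟩
      exact ⟨i, Subtype.ext hi⟩
    have hgb : Function.Bijective g :=
      (Fintype.bijective_iff_surjective_and_card g).2
        ⟨hgs, by simp [Fintype.card_coe, hcardS]⟩
    intro i j hij
    exact hgb.1 (Subtype.ext hij)
  have hkey : ∀ i, onBoundary a b (s i) →
      epath a b (cwIdx a b (s i)) = s i ∧ 1 ≤ cwIdx a b (s i) ∧ cwIdx a b (s i) < N :=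
    fun i h => epath_cwIdx a b (s i) ha hb h (hmem i).1 (hmem i).2.1 (hmem i).2.2
  refine ⟨fun t i => if onBoundary a b (s i)
      then epath a b (posIdx N (cwIdx a b (s i)) t) else s i, ?_, ?_, ?_⟩
  · funext i
    by_cases h : onBoundary a b (s i)
    · obtain ⟨he, hk1, hkN⟩ := hkey i h
      simp only [if_pos h]
      rw [show posIdx N (cwIdx a b (s i)) 0 = cwIdx a b (s i) from if_pos (by omega)]
      exact he
    · simp only [if_neg h]
  · intro t ht
    by_cases hc : t + 1 < N
    · refine move_step a b n N ha hb hNdef s hinj hmem hrange t (t+1) ht (by omega) hc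
        ?_ ?_ ?_
      · simp only [posIdx]; split_ifs <;> omega
      · rw [show posIdx N (t+1) t = t + 1 from if_pos (by omega)]
      · intro k' h1 h2 h3
        simp only [posIdx]; split_ifs <;> omega
    · have htN : t + 1 = N := by omega
      refine move_step a b n N ha hb hNdef s hinj hmem hrange t 1 ht le_rfl (by omega)
        ?_ ?_ ?_
      · simp only [posIdx]; split_ifs <;> omega
      · rw [show posIdx N 1 t = 0 by simp only [posIdx]; split_ifs <;> omega,
          epath_zero a b hb, htN, hNdef, epath_last a b ha hb]
      · intro k' h1 h2 h3
        simp only [posIdx]; split_ifs <;> omega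
  · intro i
    beta_reduce
    by_cases h : onBoundary a b (s i)
    · obtain ⟨he, hk1, hkN⟩ := hkey i h
      rw [if_pos h, if_pos h]
      conv_rhs => rw [← he]
      unfold shiftTarget
      rw [nextCCW_epath a b (cwIdx a b (s i)) ha hb hk1 (by omega)]
      by_cases hk2 : 2 ≤ cwIdx a b (s i)
      · rw [if_neg (epath_ne_zero a b (cwIdx a b (s i) - 1) ha hb (by omega) (by omega))]
        rw [show posIdx N (cwIdx a b (s i)) N = cwIdx a b (s i) - 1 by
          simp only [posIdx]; split_ifs <;> omega]
      · have hk1' : cwIdx a b (s i) = 1 := by omega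
        rw [hk1']
        rw [show (1:ℕ) - 1 = 0 from rfl, epath_zero a b hb, if_pos rfl,
          nextCCW_pair]
        rw [if_pos (by constructor <;> omega : (0:ℕ) = 0 ∧ 0 + 1 < a)]
        rw [show posIdx N 1 N = N - 1 by simp only [posIdx]; split_ifs <;> omega,
          zero_add]
        rw [show N - 1 = 2*a+2*b-5 by omega]
        exact epath_pred_last a b ha hb
    · rw [if_neg h, if_neg h]
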